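/- The eventual-equality relation E_0 on Cantor space is not smooth: there is no Borel measurable function f : 2^ℕ → ℝ such that x E_0 y ↔ f(x) = f(y) for all x, y. -/

import Mathlib

/-- Eventual equality on Cantor space. -/
def E0 (x y : ℕ → Bool) : Prop := ∃ n : ℕ, ∀ m ≥ n, x m = y m

namespace E0Aux

open MeasureTheory Set Filter Topology
open scoped ENNReal

/-- `Bool` with xor is an additive group. -/
instance : AddCommGroup Bool where
  add := xor
  zero := false
  neg := id
  add_assoc := by decide
  zero_add := by decide
  add_zero := by decide
  neg_add_cancel := by decide
  add_comm := by decide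
  nsmul := nsmulRec
  zsmul := zsmulRec

abbrev G : Type := ℕ → Bool

instance : ContinuousAdd G :=
  ⟨continuous_pi fun i => by
    have h : (fun x : G × G => (x.1 + x.2) i) =
        (fun q : Bool × Bool => q.1 + q.2) ∘ (fun x : G × G => (x.1 i, x.2 i)) := rfl
    rw [h]
    exact Continuous.comp (continuous_of_discreteTopology)
      (((continuous_apply i).comp continuous_fst).prodMk
        ((continuous_apply i).comp continuous_snd))⟩

instance : ContinuousNeg G := ⟨by
  have h : (fun x : G => -x) = id := by
    funext x; funext i; rfl
  rw [h]; exact continuous_id⟩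

instance : IsTopologicalAddGroup G := ⟨⟩

instance : MeasurableAdd₂ G :=
  ⟨by
    apply measurable_pi_iff.2
    intro i
    have h : (fun x : G × G => (x.1 + x.2) i) =
        (fun q : Bool × Bool => q.1 + q.2) ∘ (fun x : G × G => (x.1 i, x.2 i)) := rfl
    rw [h]
    exact Measurable.comp (measurable_of_countable _)
      (((measurable_pi_apply i).comp measurable_fst).prodMk
        ((measurable_pi_apply i).comp measurable_snd))⟩

noncomputable def μ : Measure G := Measure.addHaarMeasure (⊤ : TopologicalSpace.PositiveCompacts G)

instance : Measure.IsAddLeftInvariant μ := by unfold μ; infer_instance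

instance : IsProbabilityMeasure μ :=
  ⟨by
    have h := Measure.addHaarMeasure_self (K₀ := (⊤ : TopologicalSpace.PositiveCompacts G))
    rwa [TopologicalSpace.PositiveCompacts.coe_top] at h⟩

/-- The basic cylinder of length `n` around `s`. -/
def cyl (n : ℕ) (s : G) : Set G := {y | ∀ i < n, y i = s i}

lemma cyl_congr {n : ℕ} {s t : G} (h : ∀ i < n, s i = t i) : cyl n s = cyl n t := by
  ext y; constructor <;> intro hy i hi
  · rw [hy i hi, h i hi]
  · rw [hy i hi, ← h i hi]

lemma measurableSet_cyl {n : ℕ} {s : G} : MeasurableSet (cyl n s) := by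
  have h : cyl n s = ⋂ (i : Fin n), (fun y : G => y (i : ℕ)) ⁻¹' {s (i : ℕ)} := by
    ext y
    simp only [cyl, mem_setOf_eq, mem_iInter, mem_preimage, mem_singleton_iff]
    exact ⟨fun h i => h i i.2, fun h i hi => h ⟨i, hi⟩⟩
  rw [h]
  exact MeasurableSet.iInter fun i => measurable_pi_apply _ (measurableSet_singleton _)

lemma preimage_add_cyl {n : ℕ} {s : G} (v : G) :
    (fun x => v + x) ⁻¹' cyl n s = cyl n (v + s) := by
  have key : ∀ a b c : Bool, (a + b = c) ↔ (b = a + c) := by decide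
  ext x
  simp only [mem_preimage, cyl, mem_setOf_eq]
  exact ⟨fun h i hi => (key _ _ _).1 (h i hi), fun h i hi => (key _ _ _).2 (h i hi)⟩

/-- Extend a pattern on `Fin n` by `false`. -/
def ext' (n : ℕ) (p : Fin n → Bool) : G := fun m => if h : m < n then p ⟨m, h⟩ else false

lemma ext'_lt {n : ℕ} (p : Fin n → Bool) {m : ℕ} (h : m < n) : ext' n p m = p ⟨m, h⟩ :=
  dif_pos h

lemma cyl_disjoint {n : ℕ} {p q : Fin n → Bool} (h : p ≠ q) :
    Disjoint (cyl n (ext' n p)) (cyl n (ext' n q)) := by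
  rw [Set.disjoint_left]
  intro x hp hq
  apply h
  funext i
  have h1 := hp i i.2
  have h2 := hq i i.2
  rw [ext'_lt p i.2] at h1
  rw [ext'_lt q i.2] at h2
  rw [← h1, ← h2]

lemma cyl_cover {n : ℕ} : ⋃ p : Fin n → Bool, cyl n (ext' n p) = univ := by
  apply eq_univ_of_forall
  intro x
  refine mem_iUnion.2 ⟨fun i => x i, fun i hi => ?_⟩
  rw [ext'_lt _ hi]

/-- Finitely supported vectors. -/
def FinSupp (v : G) : Prop := ∃ n, ∀ m ≥ n, v m = false

lemma meas_inter_cyl {A : Set G} (hA : MeasurableSet A)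
    (hinv : ∀ v : G, FinSupp v → (fun x => v + x) ⁻¹' A = A) (n : ℕ) (s : G) :
    (2 ^ n : ℝ≥0∞) * μ (A ∩ cyl n s) = μ A := by
  have key : ∀ t : G, μ (A ∩ cyl n t) = μ (A ∩ cyl n s) := by
    intro t
    set v : G := fun i => if i < n then t i + s i else false with hv_def
    have hv : FinSupp v := ⟨n, fun m hm => by simp only [hv_def, if_neg (not_lt.2 hm)]⟩
    have hcancel : ∀ a b : Bool, a + b + b = a := by decide
    have h1 : (fun x => v + x) ⁻¹' (A ∩ cyl n s) = A ∩ cyl n t := by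
      rw [preimage_inter, hinv v hv, preimage_add_cyl]
      congr 1
      apply cyl_congr
      intro i hi
      show v i + s i = t i
      simp only [hv_def, if_pos hi]
      exact hcancel _ _
    rw [← h1, measure_preimage_add]
  have hmeas : ∀ p : Fin n → Bool, MeasurableSet (A ∩ cyl n (ext' n p)) :=
    fun p => hA.inter measurableSet_cyl
  have hdisj : Pairwise (Function.onFun Disjoint fun p : Fin n → Bool =>
      A ∩ cyl n (ext' n p)) := fun p q h =>
    ((cyl_disjoint h).mono inter_subset_right inter_subset_right)
  have hunion : ⋃ p : Fin n → Bool, (A ∩ cyl n (ext' n p)) = A := by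
    rw [← inter_iUnion, cyl_cover, inter_univ]
  have hsum := measure_iUnion hdisj hmeas (μ := μ)
  rw [hunion, tsum_fintype] at hsum
  rw [Finset.sum_congr rfl (fun p _ => key (ext' n p)), Finset.sum_const, Finset.card_univ,
    Fintype.card_fun, Fintype.card_bool, Fintype.card_fin, nsmul_eq_mul] at hsum
  rw [hsum]
  norm_cast

lemma pow_ne_zero' (n : ℕ) : (2 ^ n : ℝ≥0∞) ≠ 0 := by positivity

lemma pow_ne_top' (n : ℕ) : (2 ^ n : ℝ≥0∞) ≠ ⊤ :=
  ENNReal.pow_ne_top (by norm_num)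

lemma meas_inter_cyl' {A : Set G} (hA : MeasurableSet A)
    (hinv : ∀ v : G, FinSupp v → (fun x => v + x) ⁻¹' A = A) (n : ℕ) (s : G) :
    μ (A ∩ cyl n s) = μ A * (2 ^ n : ℝ≥0∞)⁻¹ := by
  have h := meas_inter_cyl hA hinv n s
  rw [← h, mul_comm (2 ^ n : ℝ≥0∞), mul_assoc,
    ENNReal.mul_inv_cancel (pow_ne_zero' n) (pow_ne_top' n), mul_one]

lemma meas_cyl (n : ℕ) (s : G) : μ (cyl n s) = (2 ^ n : ℝ≥0∞)⁻¹ := by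
  have h := meas_inter_cyl' (A := univ) MeasurableSet.univ
    (fun v _ => by simp) n s
  simpa [measure_univ] using h

/-- The collection of cylinders is a π-system generating the σ-algebra. -/
def P : Set (Set G) := {S | ∃ n s, S = cyl n s}

lemma isPiSystem_P : IsPiSystem P := by
  have main : ∀ (n m : ℕ) (s t : G), n ≤ m → (cyl n s ∩ cyl m t).Nonempty →
      cyl n s ∩ cyl m t = cyl m t := by
    rintro n m s t hnm ⟨z, hzs, hzt⟩
    rw [inter_eq_right]
    intro y hy i hi
    have h1 : z i = t i := hzt i (lt_of_lt_of_le hi hnm)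
    have h2 : z i = s i := hzs i hi
    rw [hy i (lt_of_lt_of_le hi hnm), ← h1, h2]
  rintro S ⟨n, s, rfl⟩ T ⟨m, t, rfl⟩ hne
  rcases le_total n m with h | h
  · rw [main n m s t h hne]; exact ⟨m, t, rfl⟩
  · rw [inter_comm] at hne ⊢
    rw [main m n t s h hne]; exact ⟨n, s, rfl⟩

lemma generateFrom_P : (inferInstance : MeasurableSpace G) = MeasurableSpace.generateFrom P := by
  apply le_antisymm
  · rw [show (inferInstance : MeasurableSpace G) = MeasurableSpace.pi from rfl]
    refine iSup_le fun i => ?_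
    rw [MeasurableSpace.comap_le_iff_le_map]
    intro T _
    have hb : ∀ b : Bool, MeasurableSet[MeasurableSpace.generateFrom P]
        ((fun x : G => x i) ⁻¹' {b}) := by
      intro b
      have heq : (fun x : G => x i) ⁻¹' {b} =
          ⋃ (p : Fin (i + 1) → Bool) (_ : p ⟨i, Nat.lt_succ_self i⟩ = b),
            cyl (i + 1) (ext' (i + 1) p) := by
        ext x
        simp only [mem_preimage, mem_singleton_iff, mem_iUnion]
        constructor
        · intro hx
          refine ⟨fun j => x j, hx, fun j hj => ?_⟩
          rw [ext'_lt _ hj]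
        · rintro ⟨p, hp, hx⟩
          have h := hx i (Nat.lt_succ_self i)
          rw [ext'_lt p (Nat.lt_succ_self i)] at h
          rw [h, hp]
      rw [heq]
      exact MeasurableSet.iUnion fun p => MeasurableSet.iUnion fun _ =>
        MeasurableSpace.measurableSet_generateFrom ⟨i + 1, ext' (i + 1) p, rfl⟩
    have hT : (fun x : G => x i) ⁻¹' T = ⋃ b ∈ T, (fun x : G => x i) ⁻¹' {b} := by
      ext x; simp
    rw [MeasurableSpace.map_def, hT]
    exact MeasurableSet.biUnion T.to_countable fun b _ => hb b
  · exact MeasurableSpace.generateFrom_le (by rintro S ⟨n, s, rfl⟩; exact measurableSet_cyl)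

/-- Zero–one law: a measurable set invariant under all finitely supported translations
has measure `0` or `1`. -/
lemma zero_one {A : Set G} (hA : MeasurableSet A)
    (hinv : ∀ v : G, FinSupp v → (fun x => v + x) ⁻¹' A = A) :
    μ A = 0 ∨ μ A = 1 := by
  have hfin : μ A ≠ ⊤ := measure_ne_top μ A
  haveI : IsFiniteMeasure (μ A • μ) :=
    ⟨by
      rw [Measure.smul_apply, smul_eq_mul, measure_univ, mul_one]
      exact hfin.lt_top⟩
  have hext : μ.restrict A = μ A • μ := by
    refine ext_of_generate_finite P generateFrom_P isPiSystem_P ?_ ?_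
    · rintro S ⟨n, s, rfl⟩
      rw [Measure.restrict_apply measurableSet_cyl, inter_comm,
        meas_inter_cyl' hA hinv n s, Measure.smul_apply, smul_eq_mul, meas_cyl]
    · rw [Measure.restrict_apply_univ, Measure.smul_apply, smul_eq_mul, measure_univ, mul_one]
  have hAA : μ A = μ A * μ A := by
    have h1 : (μ.restrict A) A = μ A := by rw [Measure.restrict_apply hA, inter_self]
    have h2 : (μ A • μ) A = μ A * μ A := by rw [Measure.smul_apply, smul_eq_mul]
    calc μ A = (μ.restrict A) A := h1.symm
    _ = (μ A • μ) A := by rw [hext]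
    _ = μ A * μ A := h2
  by_cases h0 : μ A = 0
  · exact Or.inl h0
  · right
    have hc := ENNReal.mul_inv_cancel h0 hfin
    calc μ A = μ A * (μ A * (μ A)⁻¹) := by rw [hc, mul_one]
    _ = (μ A * μ A) * (μ A)⁻¹ := by rw [mul_assoc]
    _ = μ A * (μ A)⁻¹ := by rw [← hAA]
    _ = 1 := hc

instance : NullSingletonClass μ := by
  constructor
  intro x
  by_contra h0
  obtain ⟨n, hn⟩ := ENNReal.exists_inv_two_pow_lt h0
  have hle : μ {x} ≤ (2 : ℝ≥0∞)⁻¹ ^ n := by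
    have hsub : {x} ⊆ cyl n x := fun y hy i _ => by rw [mem_singleton_iff.1 hy]
    calc μ {x} ≤ μ (cyl n x) := measure_mono hsub
    _ = (2 ^ n : ℝ≥0∞)⁻¹ := meas_cyl n x
    _ = (2 : ℝ≥0∞)⁻¹ ^ n := by rw [ENNReal.inv_pow]
  exact absurd (lt_of_le_of_lt hle hn) (lt_irrefl _)

lemma E0_class_countable (x : G) : {y : G | E0 y x}.Countable := by
  have h : {y : G | E0 y x} = ⋃ n : ℕ, {y : G | ∀ m ≥ n, y m = x m} := by
    ext y; simp [E0]
  rw [h]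
  refine countable_iUnion fun n => ?_
  have hsub : {y : G | ∀ m ≥ n, y m = x m} ⊆
      range (fun p : Fin n → Bool => (fun m => if h : m < n then p ⟨m, h⟩ else x m : G)) := by
    intro y hy
    refine ⟨fun i => y i, ?_⟩
    funext m
    by_cases h : m < n
    · simp [h]
    · simp only [dif_neg h]
      exact (hy m (not_lt.1 h)).symm
  exact (countable_range _).mono hsub

end E0Aux

open MeasureTheory Set Filter E0Aux in
/-- `E_0` is not smooth: there is no Borel measurable `f : 2^ℕ → ℝ` with
`x E_0 y ↔ f x = f y`. -/
theorem E0_not_smooth :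
    ¬ ∃ f : (ℕ → Bool) → ℝ, Measurable f ∧ ∀ x y, E0 x y ↔ f x = f y := by
  rintro ⟨f, hf, hE⟩
  set ν : Measure ℝ := μ.map f with hν_def
  haveI : IsProbabilityMeasure ν := Measure.isProbabilityMeasure_map hf.aemeasurable
  -- every measurable set has ν-measure 0 or 1
  have hzo : ∀ B : Set ℝ, MeasurableSet B → ν B = 0 ∨ ν B = 1 := by
    intro B hB
    rw [hν_def, Measure.map_apply hf hB]
    apply zero_one (hf hB)
    rintro v ⟨n, hv⟩
    ext x
    simp only [Set.mem_preimage]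
    have hfx : f (v + x) = f x := by
      apply (hE (v + x) x).1
      refine ⟨n, fun m hm => ?_⟩
      show v m + x m = x m
      rw [hv m hm]
      exact zero_add (x m)
    rw [hfx]
  -- ν has no atoms
  have hatom : ∀ r : ℝ, ν {r} = 0 := by
    intro r
    rw [hν_def, Measure.map_apply hf (measurableSet_singleton r)]
    rcases Set.eq_empty_or_nonempty (f ⁻¹' {r}) with h | ⟨x₀, hx₀⟩
    · rw [h]; exact measure_empty
    · have hsub : f ⁻¹' {r} ⊆ {y | E0 y x₀} := by
        intro y hy
        refine (hE y x₀).2 ?_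
        rw [Set.mem_preimage, Set.mem_singleton_iff] at hy hx₀
        rw [hy, hx₀]
      exact measure_mono_null hsub ((E0_class_countable x₀).measure_zero μ)
  -- complements of full-measure sets are null
  have hcompl : ∀ B : Set ℝ, MeasurableSet B → ν B = 1 → ν Bᶜ = 0 := by
    intro B hB h1
    rw [prob_compl_eq_one_sub hB, h1, tsub_self]
  -- the set of thresholds with full measure
  set S : Set ℝ := {t : ℝ | ν (Set.Iic t) = 1} with hS_def
  have hmono : ∀ {a b : ℝ}, a ≤ b → ν (Set.Iic a) ≤ ν (Set.Iic b) :=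
    fun hab => measure_mono (Set.Iic_subset_Iic.2 hab)
  -- S is nonempty
  have hSne : S.Nonempty := by
    by_contra h
    rw [Set.not_nonempty_iff_eq_empty] at h
    have h0 : ∀ n : ℕ, ν (Set.Iic (n : ℝ)) = 0 := by
      intro n
      refine (hzo _ measurableSet_Iic).resolve_right fun h1 => ?_
      have hmem : (n : ℝ) ∈ S := h1
      rw [h] at hmem
      exact hmem
    have hcov : ⋃ n : ℕ, Set.Iic (n : ℝ) = Set.univ := by
      apply Set.eq_univ_of_forall
      intro x
      obtain ⟨n, hn⟩ := exists_nat_ge x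
      exact Set.mem_iUnion.2 ⟨n, hn⟩
    have hz : ν Set.univ = 0 := by
      rw [← hcov]
      exact measure_iUnion_null h0
    rw [measure_univ] at hz
    exact one_ne_zero hz
  -- S is bounded below
  have hbdd : BddBelow S := by
    have h0 : ∃ n : ℕ, ν (Set.Iic (-(n : ℝ))) = 0 := by
      by_contra h
      push_neg at h
      have h1 : ∀ n : ℕ, ν (Set.Ioi (-(n : ℝ))) = 0 := by
        intro n
        have := hcompl _ measurableSet_Iic
          ((hzo _ measurableSet_Iic).resolve_left (h n))
        rwa [Set.compl_Iic] at this
      have hcov : ⋃ n : ℕ, Set.Ioi (-(n : ℝ)) = Set.univ := by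
        apply Set.eq_univ_of_forall
        intro x
        obtain ⟨n, hn⟩ := exists_nat_ge (-x)
        refine Set.mem_iUnion.2 ⟨n + 1, ?_⟩
        rw [Set.mem_Ioi]
        push_cast
        linarith
      have hz : ν Set.univ = 0 := by
        rw [← hcov]
        exact measure_iUnion_null h1
      rw [measure_univ] at hz
      exact one_ne_zero hz
    obtain ⟨n, hn⟩ := h0
    refine ⟨-(n : ℝ), fun t ht => ?_⟩
    by_contra hlt
    push_neg at hlt
    have hle : ν (Set.Iic t) ≤ ν (Set.Iic (-(n : ℝ))) := hmono hlt.le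
    rw [ht, hn] at hle
    exact absurd hle (by norm_num)
  set t0 : ℝ := sInf S with ht0_def
  -- above t0: measure 1
  have habove : ∀ t : ℝ, t0 < t → ν (Set.Iic t) = 1 := by
    intro t ht
    obtain ⟨s, hsS, hst⟩ := Real.lt_sInf_add_pos hSne (show (0:ℝ) < t - t0 by linarith)
    have hs : s ≤ t := by rw [← ht0_def] at hst; linarith
    have hle := hmono hs
    rw [hsS] at hle
    exact le_antisymm prob_le_one hle
  -- below t0: measure 0
  have hbelow : ∀ t : ℝ, t < t0 → ν (Set.Iic t) = 0 := by
    intro t ht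
    refine (hzo (Set.Iic t) measurableSet_Iic).resolve_right fun h => ?_
    have : t0 ≤ t := csInf_le hbdd h
    linarith
  -- ν (Iio t0) = 0
  have hIio : ν (Set.Iio t0) = 0 := by
    have hcup : ⋃ n : ℕ, Set.Iic (t0 - 1 / ((n : ℝ) + 1)) = Set.Iio t0 := by
      ext x
      simp only [Set.mem_iUnion, Set.mem_Iic, Set.mem_Iio]
      constructor
      · rintro ⟨n, hn⟩
        have hp : (0:ℝ) < 1 / ((n : ℝ) + 1) := by positivity
        linarith
      · intro h
        obtain ⟨n, hn⟩ := exists_nat_one_div_lt (show (0:ℝ) < t0 - x by linarith)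
        exact ⟨n, by linarith⟩
    rw [← hcup]
    apply measure_iUnion_null
    intro n
    apply hbelow
    have hp : (0:ℝ) < 1 / ((n : ℝ) + 1) := by positivity
    linarith
  -- ν (Iic t0) = 1
  have hIic : ν (Set.Iic t0) = 1 := by
    have hIoi : ν (Set.Ioi t0) = 0 := by
      have hcup : ⋃ n : ℕ, Set.Ioi (t0 + 1 / ((n : ℝ) + 1)) = Set.Ioi t0 := by
        ext x
        simp only [Set.mem_iUnion, Set.mem_Ioi]
        constructor
        · rintro ⟨n, hn⟩
          have hp : (0:ℝ) < 1 / ((n : ℝ) + 1) := by positivity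
          linarith
        · intro h
          obtain ⟨n, hn⟩ := exists_nat_one_div_lt (show (0:ℝ) < x - t0 by linarith)
          exact ⟨n, by linarith⟩
      rw [← hcup]
      apply measure_iUnion_null
      intro n
      have h1 : ν (Set.Iic (t0 + 1 / ((n : ℝ) + 1))) = 1 := by
        apply habove
        have hp : (0:ℝ) < 1 / ((n : ℝ) + 1) := by positivity
        linarith
      have := hcompl _ measurableSet_Iic h1
      rwa [Set.compl_Iic] at this
    have := prob_compl_eq_one_sub (μ := ν) (s := Set.Ioi t0) measurableSet_Ioi
    rw [Set.compl_Ioi, hIoi, tsub_zero] at this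
    exact this
  -- contradiction: ν {t0} = 1 but atoms are null
  have hsplit : ν (Set.Iic t0) ≤ ν (Set.Iio t0) + ν {t0} := by
    have hsub : Set.Iic t0 ⊆ Set.Iio t0 ∪ {t0} := by
      intro x hx
      rcases lt_or_eq_of_le (Set.mem_Iic.1 hx) with h | h
      · exact Or.inl h
      · exact Or.inr h
    exact le_trans (measure_mono hsub) (measure_union_le _ _)
  rw [hIic, hIio, hatom t0, zero_add] at hsplit
  exact absurd hsplit (by norm_num)
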